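/- arXiv:1302.0715 — 2 statements merged into one kernel-verified Lean document; each statement's English description precedes it below -/
import Mathlib

section
/- For every n ∈ ℕ, the family 𝒢_n is compact: the set of indicator functions {χ_F : F ∈ 𝒢_n} is a closed (hence compact) subset of the product space {0,1}^{2^ℕ}. Equivalently, every cluster point in {0,1}^{2^ℕ} of a sequence of indicators of members of 𝒢_n is itself the indicator of a member of 𝒢_n; in particular every such cluster point is the indicator of a finite set. -/
abbrev Cantor : Type := ℕ → Bool

/- `wedgeLen σ τ` is the length `|σ∧τ| ∈ ℕ∞` of the longest common initial segment
of `σ` and `τ` (`⊤` if `σ = τ`).  Since wedges `σ∧τ`, `σ∧τ'` of a common sequence are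
initial segments of that sequence, comparisons `⊑`, `⊏`, `=` between such wedges are
equivalent to `≤`, `<`, `=` between their lengths. -/
open Classical in
noncomputable def wedgeLen (σ τ : Cantor) : ℕ∞ :=
  if h : σ = τ then ⊤ else ((Nat.find (Function.ne_iff.mp h) : ℕ) : ℕ∞)

/-- `GS n F σ m M` : the pair `(F,σ)` belongs to `𝒢ₛ_n` via a derivation attaching the
values `min(F,σ) = m` and `max(F,σ) = M`. -/
inductive GS : ℕ → Finset Cantor → Cantor → ℕ∞ → ℕ∞ → Prop
  | base (d : ℕ) (τ : Fin (d + 1) → Cantor) (σ : Cantor) (F : Finset Cantor)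
      (h1 : ∀ i, σ ≠ τ i)
      (h2 : 0 < wedgeLen σ (τ 0))
      (h3 : ∀ i j : Fin (d + 1), i < j → wedgeLen σ (τ i) < wedgeLen σ (τ j))
      (h4 : ((d + 1 : ℕ) : ℕ∞) ≤ wedgeLen σ (τ 0))
      (hF : ∀ x, x ∈ F ↔ ∃ i, x = τ i) :
      GS 1 F σ (wedgeLen σ (τ 0)) (wedgeLen σ (τ (Fin.last d)))
  | up (n : ℕ) (F : Finset Cantor) (σ : Cantor) (m M : ℕ∞) :
      GS n F σ m M → GS (n + 1) F σ m M
  | skipped (n : ℕ) (d : ℕ) (Fs : Fin (d + 1) → Finset Cantor)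
      (σs : Fin (d + 1) → Cantor) (mins maxs : Fin (d + 1) → ℕ∞)
      (σ : Cantor) (F : Finset Cantor)
      (hGS : ∀ i, GS n (Fs i) (σs i) (mins i) (maxs i))
      (hdisj : ∀ i j : Fin (d + 1), i ≠ j → ∀ x, x ∈ Fs i → x ∉ Fs j)
      (hne : ∀ i, σ ≠ σs i)
      (h0 : 0 < wedgeLen σ (σs 0))
      (hmono : ∀ i j : Fin (d + 1), i < j → wedgeLen σ (σs i) < wedgeLen σ (σs j))
      (hlt : ∀ i, wedgeLen σ (σs i) < mins i)
      (hd : ((d + 1 : ℕ) : ℕ∞) ≤ wedgeLen σ (σs 0))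
      (hF : ∀ x, x ∈ F ↔ ∃ i, x ∈ Fs i) :
      GS (n + 1) F σ (wedgeLen σ (σs 0)) (wedgeLen σ (σs (Fin.last d)))
  | attached (n : ℕ) (d : ℕ) (Fs : Fin (d + 1) → Finset Cantor)
      (mins maxs : Fin (d + 1) → ℕ∞) (σ : Cantor) (F : Finset Cantor)
      (hGS : ∀ i, GS n (Fs i) σ (mins i) (maxs i))
      (hdisj : ∀ i j : Fin (d + 1), i ≠ j → ∀ x, x ∈ Fs i → x ∉ Fs j)
      (hord : ∀ i : Fin d, maxs i.castSucc < mins i.succ)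
      (hd : ((d + 1 : ℕ) : ℕ∞) ≤ mins 0)
      (hF : ∀ x, x ∈ F ↔ ∃ i, x ∈ Fs i) :
      GS (n + 1) F σ (mins 0) (maxs (Fin.last d))

/-- The family `𝒢_n` of finite subsets of the Cantor set. -/
def Gfam (n : ℕ) : Set (Finset Cantor) :=
  {F | F = ∅ ∨ ∃ σ m M, GS n F σ m M}

/-- The indicator function of a set of branches, with values in `Bool`. -/
noncomputable def χS (F : Set Cantor) : Cantor → Bool :=
  fun τ => @ite _ (τ ∈ F) (Classical.propDecidable _) true false
lemma enat_le_of_forall {x y : ℕ∞} (h : ∀ k : ℕ, (k:ℕ∞) ≤ x → (k:ℕ∞) ≤ y) : x ≤ y := by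
  induction x using ENat.recTopCoe with
  | top =>
    induction y using ENat.recTopCoe with
    | top => exact le_rfl
    | coe n => exact absurd (h (n+1) le_top) (by exact_mod_cast by omega)
  | coe k => exact h k le_rfl

open Classical in
lemma wedge_le_iff (σ τ : Cantor) (k : ℕ) :
    (k : ℕ∞) ≤ wedgeLen σ τ ↔ ∀ j < k, σ j = τ j := by
  unfold wedgeLen
  split_ifs with h
  · subst h; simp
  · rw [Nat.cast_le, Nat.le_find_iff]
    simp

lemma wedge_self (σ : Cantor) : wedgeLen σ σ = ⊤ := by
  unfold wedgeLen; simp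

lemma wedge_ultra (σ ρ τ : Cantor) :
    min (wedgeLen σ ρ) (wedgeLen ρ τ) ≤ wedgeLen σ τ := by
  apply enat_le_of_forall
  intro k hk
  rw [le_min_iff] at hk
  obtain ⟨h1, h2⟩ := hk
  rw [wedge_le_iff] at h1 h2 ⊢
  intro j hj
  rw [h1 j hj, h2 j hj]
lemma GS_ne_zero {n : ℕ} {F : Finset Cantor} {σ : Cantor} {m M : ℕ∞}
    (h : GS n F σ m M) : n ≠ 0 := by
  cases h <;> simp

lemma GS_min_le_max {n : ℕ} {F : Finset Cantor} {σ : Cantor} {m M : ℕ∞}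
    (h : GS n F σ m M) : m ≤ M := by
  induction h with
  | base d τ σ F h1 h2 h3 h4 hF =>
    rcases eq_or_lt_of_le (Fin.zero_le (Fin.last d)) with h | h
    · rw [← h]
    · exact (h3 0 (Fin.last d) h).le
  | up n F σ m M h ih => exact ih
  | skipped n d Fs σs mins maxs σ F hGS hdisj hne h0 hmono hlt hd hF ih =>
    rcases eq_or_lt_of_le (Fin.zero_le (Fin.last d)) with h | h
    · rw [← h]
    · exact (hmono 0 (Fin.last d) h).le
  | attached n d Fs mins maxs σ F hGS hdisj hord hd hF ih =>
    have key : ∀ b : Fin (d+1), mins 0 ≤ maxs b := by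
      intro b
      induction b using Fin.induction with
      | zero => exact ih 0
      | succ b ihb => exact ihb.trans ((hord b).le.trans (ih b.succ))
    exact key (Fin.last d)

lemma GS_one_le_min {n : ℕ} {F : Finset Cantor} {σ : Cantor} {m M : ℕ∞}
    (h : GS n F σ m M) : 1 ≤ m := by
  induction h with
  | base d τ σ F h1 h2 h3 h4 hF =>
    exact le_trans (by exact_mod_cast Nat.one_le_iff_ne_zero.mpr (Nat.succ_ne_zero d)) h4
  | up n F σ m M h ih => exact ih
  | skipped n d Fs σs mins maxs σ F hGS hdisj hne h0 hmono hlt hd hF ih =>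
    exact le_trans (by exact_mod_cast Nat.one_le_iff_ne_zero.mpr (Nat.succ_ne_zero d)) hd
  | attached n d Fs mins maxs σ F hGS hdisj hord hd hF ih =>
    exact le_trans (by exact_mod_cast Nat.one_le_iff_ne_zero.mpr (Nat.succ_ne_zero d)) (hd.trans le_rfl)

lemma GS_mem_wedge {n : ℕ} {F : Finset Cantor} {σ : Cantor} {m M : ℕ∞}
    (h : GS n F σ m M) : ∀ τ ∈ F, m ≤ wedgeLen σ τ := by
  induction h with
  | base d τ σ F h1 h2 h3 h4 hF =>
    intro x hx
    obtain ⟨i, rfl⟩ := (hF x).mp hx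
    rcases eq_or_lt_of_le (Fin.zero_le i) with h | h
    · rw [← h]
    · exact (h3 0 i h).le
  | up n F σ m M h ih => exact ih
  | skipped n d Fs σs mins maxs σ F hGS hdisj hne h0 hmono hlt hd hF ih =>
    intro x hx
    obtain ⟨i, hxi⟩ := (hF x).mp hx
    have h01 : wedgeLen σ (σs 0) ≤ wedgeLen σ (σs i) := by
      rcases eq_or_lt_of_le (Fin.zero_le i) with h | h
      · rw [← h]
      · exact (hmono 0 i h).le
    have h2 : wedgeLen σ (σs 0) ≤ wedgeLen (σs i) x :=
      h01.trans ((hlt i).le.trans (ih i x hxi))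
    calc wedgeLen σ (σs 0) ≤ min (wedgeLen σ (σs i)) (wedgeLen (σs i) x) :=
          le_min h01 h2
      _ ≤ wedgeLen σ x := wedge_ultra _ _ _
  | attached n d Fs mins maxs σ F hGS hdisj hord hd hF ih =>
    intro x hx
    obtain ⟨i, hxi⟩ := (hF x).mp hx
    have key : ∀ b : Fin (d+1), mins 0 ≤ mins b := by
      intro b
      induction b using Fin.induction with
      | zero => exact le_rfl
      | succ b ihb =>
        exact ihb.trans ((GS_min_le_max (hGS b.castSucc)).trans (hord b).le)
    exact (key i).trans (ih i x hxi)
lemma mono_of_strict {k : ℕ} {f : Fin k → ℕ∞} (h : ∀ i j, i < j → f i < f j) :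
    ∀ i j : Fin k, i ≤ j → f i ≤ f j := fun i j hij =>
  hij.lt_or_eq.elim (fun hl => (h i j hl).le) (fun he => he ▸ le_rfl)

lemma GS_subset {n : ℕ} {F : Finset Cantor} {σ : Cantor} {m M : ℕ∞}
    (h : GS n F σ m M) :
    ∀ G ⊆ F, G.Nonempty → ∃ m' M', GS n G σ m' M' ∧ m ≤ m' ∧ M' ≤ M := by
  induction h with
  | base d τ σ F h1 h2 h3 h4 hF =>
    intro G hG hGne
    have hmle := mono_of_strict (f := fun i => wedgeLen σ (τ i)) h3
    classical
    set J : Finset (Fin (d+1)) := Finset.univ.filter (fun i => τ i ∈ G) with hJ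
    have hmemJ : ∀ i, i ∈ J ↔ τ i ∈ G := by intro i; simp [hJ]
    have hJne : J.Nonempty := by
      obtain ⟨x, hx⟩ := hGne
      obtain ⟨i, rfl⟩ := (hF x).mp (hG hx)
      exact ⟨i, (hmemJ i).mpr hx⟩
    obtain ⟨d', hd'⟩ : ∃ d', J.card = d'+1 :=
      ⟨J.card - 1, (Nat.succ_pred_eq_of_pos hJne.card_pos).symm⟩
    let e : Fin (d'+1) ≃o {x // x ∈ J} := J.orderIsoOfFin hd'
    have hestrict : ∀ i j : Fin (d'+1), i < j → ((e i : Fin (d+1)) < (e j : Fin (d+1))) := by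
      intro i j hij
      exact_mod_cast e.strictMono hij
    have hcard : ((d'+1 : ℕ) : ℕ∞) ≤ ((d+1 : ℕ) : ℕ∞) := by
      rw [Nat.cast_le, ← hd']
      simpa using Finset.card_le_univ J
    refine ⟨_, _, GS.base d' (fun i => τ (e i)) σ G
      (fun i => h1 _)
      (lt_of_lt_of_le h2 (hmle 0 (e 0) (Fin.zero_le _)))
      (fun i j hij => h3 _ _ (hestrict i j hij))
      (hcard.trans (h4.trans (hmle 0 (e 0) (Fin.zero_le _))))
      ?_, hmle 0 (e 0) (Fin.zero_le _), hmle (e (Fin.last d')) (Fin.last d) (Fin.le_last _)⟩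
    intro x
    constructor
    · intro hx
      obtain ⟨i₀, rfl⟩ := (hF x).mp (hG hx)
      have hi₀ : i₀ ∈ J := (hmemJ i₀).mpr hx
      refine ⟨e.symm ⟨i₀, hi₀⟩, ?_⟩
      simp only [OrderIso.apply_symm_apply]
    · rintro ⟨i, rfl⟩
      exact (hmemJ _).mp (e i).2
  | up n F σ m M h ih =>
    intro G hG hGne
    obtain ⟨m', M', hGS, h1, h2⟩ := ih G hG hGne
    exact ⟨m', M', GS.up _ _ _ _ _ hGS, h1, h2⟩
  | skipped n d Fs σs mins maxs σ F hGS hdisj hne h0 hmono hlt hd hF ih =>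
    intro G hG hGne
    have hmle := mono_of_strict (f := fun i => wedgeLen σ (σs i)) hmono
    classical
    set J : Finset (Fin (d+1)) := Finset.univ.filter (fun i => (G ∩ Fs i).Nonempty) with hJ
    have hmemJ : ∀ i, i ∈ J ↔ (G ∩ Fs i).Nonempty := by intro i; simp [hJ]
    have hJne : J.Nonempty := by
      obtain ⟨x, hx⟩ := hGne
      obtain ⟨i, hi⟩ := (hF x).mp (hG hx)
      exact ⟨i, (hmemJ i).mpr ⟨x, Finset.mem_inter.mpr ⟨hx, hi⟩⟩⟩
    obtain ⟨d', hd'⟩ : ∃ d', J.card = d'+1 :=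
      ⟨J.card - 1, (Nat.succ_pred_eq_of_pos hJne.card_pos).symm⟩
    let e : Fin (d'+1) ≃o {x // x ∈ J} := J.orderIsoOfFin hd'
    have hestrict : ∀ i j : Fin (d'+1), i < j → ((e i : Fin (d+1)) < (e j : Fin (d+1))) := by
      intro i j hij
      exact_mod_cast e.strictMono hij
    have hcard : ((d'+1 : ℕ) : ℕ∞) ≤ ((d+1 : ℕ) : ℕ∞) := by
      rw [Nat.cast_le, ← hd']
      simpa using Finset.card_le_univ J
    have hch : ∀ i : Fin (d+1), ∃ m' M', (G ∩ Fs i).Nonempty →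
        (GS n (G ∩ Fs i) (σs i) m' M' ∧ mins i ≤ m' ∧ M' ≤ maxs i) := by
      intro i
      by_cases hne' : (G ∩ Fs i).Nonempty
      · obtain ⟨m', M', hh⟩ := ih i (G ∩ Fs i) Finset.inter_subset_right hne'
        exact ⟨m', M', fun _ => hh⟩
      · exact ⟨0, 0, fun hc => absurd hc hne'⟩
    choose m' M' hm using hch
    have hene : ∀ i : Fin (d'+1), (G ∩ Fs (e i)).Nonempty := fun i => (hmemJ _).mp (e i).2
    refine ⟨_, _, GS.skipped n d' (fun i => G ∩ Fs (e i)) (fun i => σs (e i))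
      (fun i => m' (e i)) (fun i => M' (e i)) σ G
      (fun i => (hm _ (hene i)).1)
      (fun i j hij x hx1 hx2 => by
        have heij : (e i : Fin (d+1)) ≠ (e j : Fin (d+1)) := by
          intro hc
          exact hij (e.injective (Subtype.ext hc))
        exact hdisj _ _ heij x (Finset.mem_inter.mp hx1).2 (Finset.mem_inter.mp hx2).2)
      (fun i => hne _)
      (lt_of_lt_of_le h0 (hmle 0 (e 0) (Fin.zero_le _)))
      (fun i j hij => hmono _ _ (hestrict i j hij))
      (fun i => lt_of_lt_of_le (hlt _) (hm _ (hene i)).2.1)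
      (hcard.trans (hd.trans (hmle 0 (e 0) (Fin.zero_le _))))
      ?_, hmle 0 (e 0) (Fin.zero_le _), hmle (e (Fin.last d')) (Fin.last d) (Fin.le_last _)⟩
    intro x
    constructor
    · intro hx
      obtain ⟨i₀, hi₀⟩ := (hF x).mp (hG hx)
      have hJi₀ : i₀ ∈ J := (hmemJ i₀).mpr ⟨x, Finset.mem_inter.mpr ⟨hx, hi₀⟩⟩
      refine ⟨e.symm ⟨i₀, hJi₀⟩, ?_⟩
      simp only [OrderIso.apply_symm_apply]
      exact Finset.mem_inter.mpr ⟨hx, hi₀⟩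
    · rintro ⟨i, hi⟩
      exact (Finset.mem_inter.mp hi).1
  | attached n d Fs mins maxs σ F hGS hdisj hord hd hF ih =>
    intro G hG hGne
    classical
    have key2 : ∀ b a : Fin (d+1), a < b → maxs a < mins b := by
      intro b
      induction b using Fin.induction with
      | zero => exact fun a ha => absurd ha (Fin.not_lt_zero a)
      | succ b ihb =>
        intro a ha
        rcases eq_or_lt_of_le (show a ≤ b.castSucc by
          rw [Fin.le_castSucc_iff]; exact ha) with heq | hlt'
        · rw [heq]; exact hord b
        · exact (ihb a hlt').trans_le ((GS_min_le_max (hGS b.castSucc)).trans (hord b).le)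
    have minsmono : ∀ a b : Fin (d+1), a ≤ b → mins a ≤ mins b := by
      intro a b hab
      rcases hab.lt_or_eq with hl | he
      · exact (GS_min_le_max (hGS a)).trans (key2 b a hl).le
      · rw [he]
    have maxsmono : ∀ a b : Fin (d+1), a ≤ b → maxs a ≤ maxs b := by
      intro a b hab
      rcases hab.lt_or_eq with hl | he
      · exact (key2 b a hl).le.trans (GS_min_le_max (hGS b))
      · rw [he]
    set J : Finset (Fin (d+1)) := Finset.univ.filter (fun i => (G ∩ Fs i).Nonempty) with hJ
    have hmemJ : ∀ i, i ∈ J ↔ (G ∩ Fs i).Nonempty := by intro i; simp [hJ]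
    have hJne : J.Nonempty := by
      obtain ⟨x, hx⟩ := hGne
      obtain ⟨i, hi⟩ := (hF x).mp (hG hx)
      exact ⟨i, (hmemJ i).mpr ⟨x, Finset.mem_inter.mpr ⟨hx, hi⟩⟩⟩
    obtain ⟨d', hd'⟩ : ∃ d', J.card = d'+1 :=
      ⟨J.card - 1, (Nat.succ_pred_eq_of_pos hJne.card_pos).symm⟩
    let e : Fin (d'+1) ≃o {x // x ∈ J} := J.orderIsoOfFin hd'
    have hestrict : ∀ i j : Fin (d'+1), i < j → ((e i : Fin (d+1)) < (e j : Fin (d+1))) := by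
      intro i j hij
      exact_mod_cast e.strictMono hij
    have hcard : ((d'+1 : ℕ) : ℕ∞) ≤ ((d+1 : ℕ) : ℕ∞) := by
      rw [Nat.cast_le, ← hd']
      simpa using Finset.card_le_univ J
    have hch : ∀ i : Fin (d+1), ∃ m' M', (G ∩ Fs i).Nonempty →
        (GS n (G ∩ Fs i) σ m' M' ∧ mins i ≤ m' ∧ M' ≤ maxs i) := by
      intro i
      by_cases hne' : (G ∩ Fs i).Nonempty
      · obtain ⟨m', M', hh⟩ := ih i (G ∩ Fs i) Finset.inter_subset_right hne'
        exact ⟨m', M', fun _ => hh⟩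
      · exact ⟨0, 0, fun hc => absurd hc hne'⟩
    choose m' M' hm using hch
    have hene : ∀ i : Fin (d'+1), (G ∩ Fs (e i)).Nonempty := fun i => (hmemJ _).mp (e i).2
    refine ⟨_, _, GS.attached n d' (fun i => G ∩ Fs (e i))
      (fun i => m' (e i)) (fun i => M' (e i)) σ G
      (fun i => (hm _ (hene i)).1)
      (fun i j hij x hx1 hx2 => by
        have heij : (e i : Fin (d+1)) ≠ (e j : Fin (d+1)) := by
          intro hc
          exact hij (e.injective (Subtype.ext hc))
        exact hdisj _ _ heij x (Finset.mem_inter.mp hx1).2 (Finset.mem_inter.mp hx2).2)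
      (fun i => by
        have hlt' : (e i.castSucc : Fin (d+1)) < (e i.succ : Fin (d+1)) :=
          hestrict _ _ Fin.castSucc_lt_succ
        exact ((hm _ (hene i.castSucc)).2.2.trans_lt (key2 _ _ hlt')).trans_le
          (hm _ (hene i.succ)).2.1)
      (hcard.trans (hd.trans ((minsmono 0 (e 0) (Fin.zero_le _)).trans (hm _ (hene 0)).2.1)))
      ?_,
      (minsmono 0 (e 0) (Fin.zero_le _)).trans (hm _ (hene 0)).2.1,
      (hm _ (hene (Fin.last d'))).2.2.trans (maxsmono (e (Fin.last d')) (Fin.last d) (Fin.le_last _))⟩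
    intro x
    constructor
    · intro hx
      obtain ⟨i₀, hi₀⟩ := (hF x).mp (hG hx)
      have hJi₀ : i₀ ∈ J := (hmemJ i₀).mpr ⟨x, Finset.mem_inter.mpr ⟨hx, hi₀⟩⟩
      refine ⟨e.symm ⟨i₀, hJi₀⟩, ?_⟩
      simp only [OrderIso.apply_symm_apply]
      exact Finset.mem_inter.mpr ⟨hx, hi₀⟩
    · rintro ⟨i, hi⟩
      exact (Finset.mem_inter.mp hi).1
/-- Structured decomposition used in the compactness induction. -/
def StructAt (n : ℕ) (F : Finset Cantor) : Prop :=
  ∃ (d : ℕ) (Fs : ℕ → Finset Cantor) (σ : Cantor),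
    (∀ x ∈ F, ((d + 1 : ℕ) : ℕ∞) ≤ wedgeLen σ x) ∧
    (∀ j, d < j → Fs j = ∅) ∧
    (∀ x, x ∈ F ↔ ∃ j, x ∈ Fs j) ∧
    (∀ j, (Fs j).card ≤ 1 ∨ ∃ σ₂ m₂ M₂, GS n (Fs j) σ₂ m₂ M₂)

lemma struct_of_card_le_one {n : ℕ} {F : Finset Cantor} (h : F.card ≤ 1) :
    StructAt n F := by
  classical
  by_cases hne : F.Nonempty
  · obtain ⟨x, hx⟩ := hne
    refine ⟨0, fun j => if j = 0 then F else ∅, x, ?_, ?_, ?_, ?_⟩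
    · intro y hy
      have : y = x := Finset.card_le_one.mp h y hy x hx
      rw [this, wedge_self]
      exact le_top
    · intro j hj; have hj0 : j ≠ 0 := by omega
      simp [hj0]
    · intro y
      constructor
      · intro hy; exact ⟨0, by simpa using hy⟩
      · rintro ⟨j, hj⟩
        by_cases hj0 : j = 0
        · simpa [hj0] using hj
        · simp [hj0] at hj
    · intro j
      by_cases hj0 : j = 0 <;> simp [hj0, h]
  · rw [Finset.not_nonempty_iff_eq_empty] at hne
    subst hne
    exact ⟨0, fun _ => ∅, fun _ => true, by simp, by simp, by simp, by simp⟩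

lemma GS_struct' {n' : ℕ} {F : Finset Cantor} {σ : Cantor} {m M : ℕ∞}
    (h : GS n' F σ m M) :
    ∀ n, n' = n + 1 → StructAt n F := by
  have hw := GS_mem_wedge h
  cases h with
  | base d τ σ F h1 h2 h3 h4 hF =>
    intro n hn
    classical
    refine ⟨d, fun j => if hj : j < d + 1 then {τ ⟨j, hj⟩} else ∅, σ, ?_, ?_, ?_, ?_⟩
    · intro x hx; exact h4.trans (hw x hx)
    · intro j hj
      have : ¬ j < d + 1 := by omega
      simp [this]
    · intro x
      rw [hF x]
      constructor
      · rintro ⟨i, rfl⟩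
        exact ⟨i.val, by simp [i.isLt]⟩
      · rintro ⟨j, hj⟩
        by_cases hjd : j < d + 1
        · simp only [dif_pos hjd, Finset.mem_singleton] at hj
          exact ⟨⟨j, hjd⟩, hj⟩
        · simp [hjd] at hj
    · intro j
      by_cases hjd : j < d + 1 <;> simp [hjd]
  | up k F σ m M hk =>
    intro n hn
    have hkn : k = n := by omega
    subst hkn
    refine ⟨0, fun j => if j = 0 then F else ∅, σ, ?_, ?_, ?_, ?_⟩
    · intro x hx
      exact le_trans (by exact_mod_cast (GS_one_le_min hk)) (hw x hx)
    · intro j hj; have hj0 : j ≠ 0 := by omega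
      simp [hj0]
    · intro x
      constructor
      · intro hx; exact ⟨0, by simpa using hx⟩
      · rintro ⟨j, hj⟩
        by_cases hj0 : j = 0
        · simpa [hj0] using hj
        · simp [hj0] at hj
    · intro j
      by_cases hj0 : j = 0
      · subst hj0; exact Or.inr ⟨σ, m, M, by simpa using hk⟩
      · simp [hj0]
  | skipped k d Fs σs mins maxs σ F hGS hdisj hne h0 hmono hlt hd hF =>
    intro n hn
    have hkn : k = n := by omega
    subst hkn
    classical
    refine ⟨d, fun j => if hj : j < d + 1 then Fs ⟨j, hj⟩ else ∅, σ, ?_, ?_, ?_, ?_⟩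
    · intro x hx; exact hd.trans (hw x hx)
    · intro j hj
      have : ¬ j < d + 1 := by omega
      simp [this]
    · intro x
      rw [hF x]
      constructor
      · rintro ⟨i, hi⟩
        exact ⟨i.val, by simpa [i.isLt] using hi⟩
      · rintro ⟨j, hj⟩
        by_cases hjd : j < d + 1
        · simp only [dif_pos hjd] at hj
          exact ⟨⟨j, hjd⟩, hj⟩
        · simp [hjd] at hj
    · intro j
      by_cases hjd : j < d + 1
      · simp only [dif_pos hjd]
        exact Or.inr ⟨_, _, _, hGS ⟨j, hjd⟩⟩
      · simp [hjd]
  | attached k d Fs mins maxs σ F hGS hdisj hord hd hF =>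
    intro n hn
    have hkn : k = n := by omega
    subst hkn
    classical
    refine ⟨d, fun j => if hj : j < d + 1 then Fs ⟨j, hj⟩ else ∅, σ, ?_, ?_, ?_, ?_⟩
    · intro x hx; exact hd.trans (hw x hx)
    · intro j hj
      have : ¬ j < d + 1 := by omega
      simp [this]
    · intro x
      rw [hF x]
      constructor
      · rintro ⟨i, hi⟩
        exact ⟨i.val, by simpa [i.isLt] using hi⟩
      · rintro ⟨j, hj⟩
        by_cases hjd : j < d + 1
        · simp only [dif_pos hjd] at hj
          exact ⟨⟨j, hjd⟩, hj⟩
        · simp [hjd] at hj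
    · intro j
      by_cases hjd : j < d + 1
      · simp only [dif_pos hjd]
        exact Or.inr ⟨_, _, _, hGS ⟨j, hjd⟩⟩
      · simp [hjd]

lemma GS_struct {n : ℕ} {F : Finset Cantor} {σ : Cantor} {m M : ℕ∞}
    (h : GS (n + 1) F σ m M) : StructAt n F :=
  GS_struct' h n rfl
lemma Qfin : ∀ (n : ℕ), ∀ {I : Type} (u : Ultrafilter I) (F : I → Finset Cantor),
    (∀ᶠ i in (u : Filter I), (F i).card ≤ 1 ∨ ∃ σ m M, GS n (F i) σ m M) →
    {τ : Cantor | ∀ᶠ i in (u : Filter I), τ ∈ F i}.Finite := by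
  intro n
  induction n with
  | zero =>
    intro I u F hF
    have hcard : ∀ᶠ i in (u : Filter I), (F i).card ≤ 1 :=
      hF.mono (fun i hi => hi.elim id
        (fun h => by obtain ⟨σ, m, M, hg⟩ := h; exact absurd rfl (GS_ne_zero hg)))
    apply Set.Subsingleton.finite
    intro τ hτ τ' hτ'
    have hτe : ∀ᶠ i in (u : Filter I), τ ∈ F i := hτ
    have hτ'e : ∀ᶠ i in (u : Filter I), τ' ∈ F i := hτ'
    obtain ⟨i, h1, h2, h3⟩ := (hτe.and (hτ'e.and hcard)).exists
    exact Finset.card_le_one.mp h3 τ h1 τ' h2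
  | succ n ih =>
    intro I u F hF
    have hS : ∀ᶠ i in (u : Filter I), StructAt n (F i) :=
      hF.mono (fun i hi => hi.elim (fun h => struct_of_card_le_one h)
        (fun h => by obtain ⟨σ, m, M, hg⟩ := h; exact GS_struct hg))
    have hsk : ∀ i, ∃ (d : ℕ) (Fs : ℕ → Finset Cantor) (σ' : Cantor),
        StructAt n (F i) →
          ((∀ x ∈ F i, ((d + 1 : ℕ) : ℕ∞) ≤ wedgeLen σ' x) ∧
           (∀ j, d < j → Fs j = ∅) ∧
           (∀ x, x ∈ F i ↔ ∃ j, x ∈ Fs j) ∧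
           (∀ j, (Fs j).card ≤ 1 ∨ ∃ σ₂ m₂ M₂, GS n (Fs j) σ₂ m₂ M₂)) := by
      intro i
      by_cases h : StructAt n (F i)
      · obtain ⟨d, Fs, σ', h1, h2, h3, h4⟩ := h
        exact ⟨d, Fs, σ', fun _ => ⟨h1, h2, h3, h4⟩⟩
      · exact ⟨0, fun _ => ∅, fun _ => true, fun hc => absurd hc h⟩
    choose d Fs σ' hprop using hsk
    have hgood : ∀ᶠ i in (u : Filter I),
        (∀ x ∈ F i, ((d i + 1 : ℕ) : ℕ∞) ≤ wedgeLen (σ' i) x) ∧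
        (∀ j, d i < j → Fs i j = ∅) ∧
        (∀ x, x ∈ F i ↔ ∃ j, x ∈ Fs i j) ∧
        (∀ j, (Fs i j).card ≤ 1 ∨ ∃ σ₂ m₂ M₂, GS n (Fs i j) σ₂ m₂ M₂) :=
      hS.mono (fun i hi => hprop i hi)
    by_cases hb : ∃ k, ∀ᶠ i in (u : Filter I), d i = k
    · obtain ⟨k, hk⟩ := hb
      have hAj : ∀ j : ℕ, {τ : Cantor | ∀ᶠ i in (u : Filter I), τ ∈ Fs i j}.Finite := by
        intro j
        exact ih u (fun i => Fs i j) (hgood.mono (fun i hi => hi.2.2.2 j))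
      apply Set.Finite.subset (Set.Finite.biUnion (Set.finite_Iic k) (fun j _ => hAj j))
      intro τ hτ
      have hτe : ∀ᶠ i in (u : Filter I), τ ∈ F i := hτ
      have hev : ∀ᶠ i in (u : Filter I), ∃ j ∈ Set.Iic k, τ ∈ Fs i j := by
        filter_upwards [hτe, hgood, hk] with i h1 h2 h3
        obtain ⟨j, hj⟩ := (h2.2.2.1 τ).mp h1
        refine ⟨j, ?_, hj⟩
        by_contra hbig
        simp only [Set.mem_Iic, not_le] at hbig
        have : Fs i j = ∅ := h2.2.1 j (by omega)
        rw [this] at hj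
        exact absurd hj (Finset.notMem_empty τ)
      have hev' : (⋃ j ∈ Set.Iic k, {i | τ ∈ Fs i j}) ∈ u := by
        have heq : {i | ∃ j ∈ Set.Iic k, τ ∈ Fs i j}
            = ⋃ j ∈ Set.Iic k, {i | τ ∈ Fs i j} := by
          ext i; simp
        rw [← heq]
        exact hev
      obtain ⟨j, hjk, hju⟩ :=
        (Ultrafilter.finite_biUnion_mem_iff (Set.finite_Iic k)).mp hev'
      exact Set.mem_biUnion hjk hju
    · push_neg at hb
      have hge : ∀ k : ℕ, ∀ᶠ i in (u : Filter I), k ≤ d i := by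
        intro k
        induction k with
        | zero => exact Filter.Eventually.of_forall (fun _ => Nat.zero_le _)
        | succ k ihk =>
          have hne : ∀ᶠ i in (u : Filter I), d i ≠ k :=
            hb k
          filter_upwards [ihk, hne] with i h1 h2
          omega
      apply Set.Subsingleton.finite
      intro τ hτ τ' hτ'
      have hτe : ∀ᶠ i in (u : Filter I), τ ∈ F i := hτ
      have hτ'e : ∀ᶠ i in (u : Filter I), τ' ∈ F i := hτ'
      by_contra hne'
      obtain ⟨j, hj⟩ := Function.ne_iff.mp hne'
      obtain ⟨i, h1, h2, h3, h4⟩ := (hτe.and (hτ'e.and (hgood.and (hge j)))).exists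
      have e1 := (wedge_le_iff (σ' i) τ (d i + 1)).mp (h3.1 τ h1) j (by omega)
      have e2 := (wedge_le_iff (σ' i) τ' (d i + 1)).mp (h3.1 τ' h2) j (by omega)
      exact hj (e1.symm.trans e2)
lemma chi_true_iff (F : Finset Cantor) (τ : Cantor) :
    χS (↑F : Set Cantor) τ = true ↔ τ ∈ F := by
  unfold χS
  split_ifs with h
  · simpa using h
  · simpa using h

theorem Gfam_compact (n : ℕ) (hn : 1 ≤ n) :
    IsClosed {f : Cantor → Bool | ∃ F ∈ Gfam n, f = χS (↑F : Set Cantor)} ∧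
    IsCompact {f : Cantor → Bool | ∃ F ∈ Gfam n, f = χS (↑F : Set Cantor)} := by
  classical
  have hclosed : IsClosed {f : Cantor → Bool | ∃ F ∈ Gfam n, f = χS (↑F : Set Cantor)} := by
    apply isClosed_of_closure_subset
    intro f hf
    rw [mem_closure_iff_ultrafilter] at hf
    obtain ⟨u, hSu, hconv⟩ := hf
    set S := {f : Cantor → Bool | ∃ F ∈ Gfam n, f = χS (↑F : Set Cantor)} with hSdef
    have hsel : ∀ g : Cantor → Bool, ∃ Fg : Finset Cantor,
        g ∈ S → (Fg ∈ Gfam n ∧ g = χS (↑Fg : Set Cantor)) := by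
      intro g
      by_cases hg : g ∈ S
      · obtain ⟨Fg, h1, h2⟩ := hg
        exact ⟨Fg, fun _ => ⟨h1, h2⟩⟩
      · exact ⟨∅, fun hc => absurd hc hg⟩
    choose Fsel hFsel using hsel
    have hmemS : ∀ᶠ g in (u : Filter (Cantor → Bool)), g ∈ S := hSu
    have hconv' : ∀ τ : Cantor, ∀ᶠ g in (u : Filter (Cantor → Bool)), g τ = f τ := by
      intro τ
      have hid : Filter.Tendsto id (u : Filter (Cantor → Bool)) (nhds f) := by
        rwa [Filter.tendsto_id']
      have ht : Filter.Tendsto (fun g : Cantor → Bool => g τ)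
          (u : Filter (Cantor → Bool)) (nhds (f τ)) :=
        ((continuous_apply τ).tendsto f).comp hid
      have hmem : ({f τ} : Set Bool) ∈ nhds (f τ) :=
        IsOpen.mem_nhds (isOpen_discrete _) rfl
      have := ht hmem
      filter_upwards [this] with g hg
      simpa using hg
    set A := {τ : Cantor | ∀ᶠ g in (u : Filter (Cantor → Bool)), τ ∈ Fsel g} with hAdef
    have hAfin : A.Finite := by
      apply Qfin n u Fsel
      filter_upwards [hmemS] with g hg
      rcases (hFsel g hg).1 with h | ⟨σ, m, M, hGS⟩
      · left; simp [h]
      · right; exact ⟨σ, m, M, hGS⟩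
    have hAiff : ∀ τ, f τ = true ↔ τ ∈ A := by
      intro τ
      constructor
      · intro hft
        filter_upwards [hconv' τ, hmemS] with g hg1 hg2
        exact (chi_true_iff _ _).mp (by rw [← (hFsel g hg2).2, hg1, hft])
      · intro hA
        have hAe : ∀ᶠ g in (u : Filter (Cantor → Bool)), τ ∈ Fsel g := hA
        obtain ⟨g, hg1, hg2, hg3⟩ := ((hconv' τ).and (hmemS.and hAe)).exists
        have : g τ = true := by
          rw [(hFsel g hg2).2]
          exact (chi_true_iff _ _).mpr hg3
        rw [← hg1]
        exact this
    refine ⟨hAfin.toFinset, ?_, ?_⟩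
    · by_cases hA : A.Nonempty
      · right
        obtain ⟨τ₀, hτ₀⟩ := hA
        have hfin_ne : hAfin.toFinset.Nonempty := ⟨τ₀, hAfin.mem_toFinset.mpr hτ₀⟩
        have hsubev : ∀ᶠ g in (u : Filter (Cantor → Bool)), hAfin.toFinset ⊆ Fsel g := by
          have hall : ∀ τ ∈ hAfin.toFinset,
              ∀ᶠ g in (u : Filter (Cantor → Bool)), τ ∈ Fsel g := by
            intro τ hτ
            exact hAfin.mem_toFinset.mp hτ
          have hev : ∀ᶠ g in (u : Filter (Cantor → Bool)),
              ∀ τ ∈ hAfin.toFinset, τ ∈ Fsel g :=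
            (Filter.eventually_all_finset hAfin.toFinset).mpr hall
          filter_upwards [hev] with g hg
          intro τ hτ
          exact hg τ hτ
        obtain ⟨g, hg1, hg2⟩ := (hsubev.and hmemS).exists
        rcases (hFsel g hg2).1 with h | ⟨σ, m, M, hGS⟩
        · exfalso
          rw [h, Finset.subset_empty] at hg1
          rw [hg1] at hfin_ne
          exact Finset.not_nonempty_empty hfin_ne
        · obtain ⟨m', M', hGS', _, _⟩ := GS_subset hGS _ hg1 hfin_ne
          exact ⟨σ, m', M', hGS'⟩
      · left
        rw [Set.not_nonempty_iff_eq_empty] at hA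
        simp [hA]
    · funext τ
      by_cases hft : f τ = true
      · have hτA : τ ∈ hAfin.toFinset := hAfin.mem_toFinset.mpr ((hAiff τ).mp hft)
        rw [hft]
        exact ((chi_true_iff _ _).mpr hτA).symm
      · rw [Bool.not_eq_true] at hft
        have h2 : χS (↑hAfin.toFinset : Set Cantor) τ = false := by
          by_contra hc
          rw [Bool.not_eq_false] at hc
          have hτA : τ ∈ A := hAfin.mem_toFinset.mp ((chi_true_iff _ _).mp hc)
          have := (hAiff τ).mpr hτA
          rw [hft] at this
          exact Bool.false_ne_true this
        rw [hft, h2]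
  exact ⟨hclosed, hclosed.isCompact⟩
end

section
/- Let n₀ ∈ ℕ, σ ∈ 2^ℕ, and (F_k)_{k≥1} be a sequence with (F_k,σ) ∈ 𝒢ₛ_{n₀} for all k, satisfying: the F_k are pairwise disjoint, and max(F_k,σ) < min(F_{k+1},σ) for all k. Then for every n ∈ ℕ and every nonempty G ∈ S_n, the pair (∪_{k∈G} F_k, σ) belongs to 𝒢ₛ_{n₀+n}, with min(∪_{k∈G} F_k, σ) = min(F_{min G},σ) and max(∪_{k∈G} F_k, σ) = max(F_{max G},σ). -/
/-- The Schreier families `S_n` (for `n ≥ 1`; the value at `0` is a dummy). -/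
def Schreier : ℕ → Set (Finset ℕ)
  | 0 => {∅}
  | 1 => {F | ∀ k ∈ F, F.card ≤ k}
  | (n + 2) => {F | F = ∅ ∨ ∃ d : ℕ, ∃ Fs : Fin (d + 1) → Finset ℕ,
      (∀ i, Fs i ∈ Schreier (n + 1) ∧ (Fs i).Nonempty) ∧
      (∀ i : Fin d, ∀ a ∈ Fs i.castSucc, ∀ b ∈ Fs i.succ, a < b) ∧
      (∀ k ∈ Fs 0, d + 1 ≤ k) ∧
      (∀ x, x ∈ F ↔ ∃ i, x ∈ Fs i)}

section Aux

variable {α : Type*} [LinearOrder α]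

lemma finChainLt {d : ℕ} (m M : Fin (d + 1) → α)
    (h1 : ∀ i, m i ≤ M i) (h2 : ∀ i : Fin d, M i.castSucc < m i.succ) :
    ∀ j i : Fin (d + 1), i < j → M i < m j := by
  intro j
  induction j using Fin.induction with
  | zero =>
      intro i hi
      exact absurd hi (by simp [Fin.lt_def])
  | succ j ih =>
      intro i hi
      have hval : i.val ≤ j.val := by
        have := hi
        rw [Fin.lt_def] at this
        simp only [Fin.val_succ] at this
        omega
      rcases eq_or_lt_of_le hval with h | h
      · have : i = j.castSucc := by
          apply Fin.ext; simpa using h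
        rw [this]; exact h2 j
      · have hi' : i < j.castSucc := by rw [Fin.lt_def]; simpa using h
        exact ((ih i hi').trans_le (h1 j.castSucc)).trans (h2 j)

lemma finChainLe {d : ℕ} (m M : Fin (d + 1) → α)
    (h1 : ∀ i, m i ≤ M i) (h2 : ∀ i : Fin d, M i.castSucc < m i.succ) :
    ∀ i j : Fin (d + 1), i ≤ j → m i ≤ M j := by
  intro i j hij
  rcases eq_or_lt_of_le hij with rfl | h
  · exact h1 i
  · exact (h1 i).trans (((finChainLt m M h1 h2 j i h).trans_le (h1 j)).le)

end Aux

lemma natChainLt (mins maxs : ℕ → ℕ∞)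
    (h1 : ∀ k, 1 ≤ k → mins k ≤ maxs k)
    (h2 : ∀ k, 1 ≤ k → maxs k < mins (k + 1)) :
    ∀ b a, 1 ≤ a → a < b → maxs a < mins b := by
  intro b
  induction b with
  | zero => intro a _ h; exact absurd h (by omega)
  | succ b ih =>
      intro a ha hab
      rcases Nat.lt_succ_iff_lt_or_eq.mp hab with h | rfl
      · exact (ih a ha h).trans_le ((h1 b (by omega)).trans (h2 b (by omega)).le)
      · exact h2 a ha

lemma natChainGe (mins maxs : ℕ → ℕ∞)
    (h1 : ∀ k, 1 ≤ k → 1 ≤ mins k ∧ mins k ≤ maxs k)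
    (h2 : ∀ k, 1 ≤ k → maxs k < mins (k + 1)) :
    ∀ k : ℕ, 1 ≤ k → (k : ℕ∞) ≤ mins k := by
  intro k
  induction k with
  | zero => intro h; exact absurd h (by omega)
  | succ k ih =>
      intro _
      rcases Nat.eq_zero_or_pos k with rfl | hk
      · simpa using (h1 1 le_rfl).1
      · have hlt : (k : ℕ∞) < mins (k + 1) :=
          lt_of_le_of_lt ((ih hk).trans (h1 k hk).2) (h2 k hk)
        have h3 : (k : ℕ∞) + 1 ≤ mins (k + 1) :=
          Order.add_one_le_of_lt hlt
        calc ((k + 1 : ℕ) : ℕ∞) = (k : ℕ∞) + 1 := by push_cast; ring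
          _ ≤ mins (k + 1) := h3

lemma GS_bounds {n : ℕ} {F : Finset Cantor} {σ : Cantor} {m M : ℕ∞}
    (h : GS n F σ m M) : 1 ≤ m ∧ m ≤ M := by
  induction h with
  | base d τ σ F h1 h2 h3 h4 hF =>
      refine ⟨le_trans ?_ h4, ?_⟩
      · exact_mod_cast Nat.succ_le_succ (Nat.zero_le d)
      · rcases Nat.eq_zero_or_pos d with rfl | hd
        · have : Fin.last 0 = (0 : Fin 1) := by decide
          rw [this]
        · exact le_of_lt (h3 0 (Fin.last d) (by rw [Fin.lt_def]; simpa [Fin.last] using hd))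
  | up n F σ m M h ih => exact ih
  | skipped n d Fs σs mins maxs σ F hGS hdisj hne h0 hmono hlt hd hF ih =>
      refine ⟨le_trans ?_ hd, ?_⟩
      · exact_mod_cast Nat.succ_le_succ (Nat.zero_le d)
      · rcases Nat.eq_zero_or_pos d with rfl | hdp
        · have : Fin.last 0 = (0 : Fin 1) := by decide
          rw [this]
        · exact le_of_lt (hmono 0 (Fin.last d) (by rw [Fin.lt_def]; simpa [Fin.last] using hdp))
  | attached n d Fs mins maxs σ F hGS hdisj hord hd hF ih =>
      refine ⟨le_trans ?_ hd, ?_⟩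
      · exact_mod_cast Nat.succ_le_succ (Nat.zero_le d)
      · exact finChainLe mins maxs (fun i => (ih i).2) hord 0 (Fin.last d) (Fin.zero_le _)

lemma schreier_pos : ∀ n : ℕ, ∀ G ∈ Schreier (n + 1), ∀ k ∈ G, 1 ≤ k := by
  intro n
  induction n with
  | zero =>
      intro G hG k hk
      have hcard : ∀ k ∈ G, G.card ≤ k := hG
      have h1 : 1 ≤ G.card := Finset.card_pos.mpr ⟨k, hk⟩
      exact h1.trans (hcard k hk)
  | succ n ih =>
      intro G hG k hk
      have hG' : G = ∅ ∨ ∃ d : ℕ, ∃ Gs : Fin (d + 1) → Finset ℕ,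
          (∀ i, Gs i ∈ Schreier (n + 1) ∧ (Gs i).Nonempty) ∧
          (∀ i : Fin d, ∀ a ∈ Gs i.castSucc, ∀ b ∈ Gs i.succ, a < b) ∧
          (∀ k ∈ Gs 0, d + 1 ≤ k) ∧
          (∀ x, x ∈ G ↔ ∃ i, x ∈ Gs i) := hG
      rcases hG' with rfl | ⟨d, Gs, hS, _, _, hFG⟩
      · exact absurd hk (by simp)
      · obtain ⟨i, hki⟩ := (hFG k).mp hk
        exact ih (Gs i) (hS i).1 k hki

theorem GS_attached_schreier_union (n₀ : ℕ) (hn₀ : 1 ≤ n₀) (σ : Cantor)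
    (Fk : ℕ → Finset Cantor) (mins maxs : ℕ → ℕ∞)
    (hGS : ∀ k, 1 ≤ k → GS n₀ (Fk k) σ (mins k) (maxs k))
    (hdisj : ∀ k l, 1 ≤ k → 1 ≤ l → k ≠ l → ∀ x, x ∈ Fk k → x ∉ Fk l)
    (hord : ∀ k, 1 ≤ k → maxs k < mins (k + 1)) :
    ∀ n : ℕ, 1 ≤ n → ∀ G ∈ Schreier n, ∀ hG : G.Nonempty,
      ∀ U : Finset Cantor, (∀ x, x ∈ U ↔ ∃ k ∈ G, x ∈ Fk k) →
        GS (n₀ + n) U σ (mins (G.min' hG)) (maxs (G.max' hG)) := by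
  classical
  have hbounds : ∀ k, 1 ≤ k → 1 ≤ mins k ∧ mins k ≤ maxs k :=
    fun k hk => GS_bounds (hGS k hk)
  have hltc : ∀ b a, 1 ≤ a → a < b → maxs a < mins b :=
    natChainLt mins maxs (fun k hk => (hbounds k hk).2) hord
  have hge : ∀ k : ℕ, 1 ≤ k → (k : ℕ∞) ≤ mins k := natChainGe mins maxs hbounds hord
  intro n
  induction n with
  | zero => intro h; exact absurd h (by omega)
  | succ n ih =>
      intro _
      rcases Nat.eq_zero_or_pos n with rfl | hnpos
      · -- base case : Schreier 1
        intro G hGmem hG U hU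
        have hcard : ∀ k ∈ G, G.card ≤ k := hGmem
        have hc1 : 1 ≤ G.card := Finset.card_pos.mpr hG
        obtain ⟨d, hdc⟩ : ∃ d, G.card = d + 1 := ⟨G.card - 1, by omega⟩
        let e := G.orderIsoOfFin hdc
        let g : Fin (d + 1) → ℕ := fun i => (e i : ℕ)
        have hmem : ∀ i, g i ∈ G := fun i => (e i).2
        have hmono : ∀ i j : Fin (d + 1), i < j → g i < g j := by
          intro i j hij
          exact_mod_cast e.strictMono hij
        have hmonole : ∀ i j : Fin (d + 1), i ≤ j → g i ≤ g j := by
          intro i j hij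
          exact_mod_cast e.monotone hij
        have hsurj : ∀ k ∈ G, ∃ i, g i = k := by
          intro k hk
          obtain ⟨i, hi⟩ := e.surjective ⟨k, hk⟩
          exact ⟨i, by simp [g, hi]⟩
        have hpos : ∀ i, 1 ≤ g i := fun i => hc1.trans (hcard _ (hmem i))
        have hmin : G.min' hG = g 0 := by
          apply le_antisymm (Finset.min'_le _ _ (hmem 0))
          obtain ⟨i, hi⟩ := hsurj _ (G.min'_mem hG)
          rw [← hi]
          exact hmonole 0 i (Fin.zero_le i)
        have hmax : G.max' hG = g (Fin.last d) := by
          apply le_antisymm _ (Finset.le_max' _ _ (hmem _))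
          obtain ⟨i, hi⟩ := hsurj _ (G.max'_mem hG)
          rw [← hi]
          exact hmonole i (Fin.last d) (Fin.le_last i)
        rw [hmin, hmax]
        exact GS.attached n₀ d (fun i => Fk (g i)) (fun i => mins (g i)) (fun i => maxs (g i))
          σ U (fun i => hGS _ (hpos i))
          (fun i j hij x hx => hdisj (g i) (g j) (hpos i) (hpos j)
            (fun h => hij (e.injective (Subtype.ext h))) x hx)
          (fun i => hltc _ _ (hpos _) (hmono i.castSucc i.succ Fin.castSucc_lt_succ))
          (by
            calc ((d + 1 : ℕ) : ℕ∞) ≤ ((g 0 : ℕ) : ℕ∞) := by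
                  exact_mod_cast hdc ▸ hcard _ (hmem 0)
              _ ≤ mins (g 0) := hge _ (hpos 0))
          (by
            intro x
            rw [hU x]
            constructor
            · rintro ⟨k, hk, hx⟩
              obtain ⟨i, rfl⟩ := hsurj k hk
              exact ⟨i, hx⟩
            · rintro ⟨i, hx⟩
              exact ⟨g i, hmem i, hx⟩)
      · -- inductive case
        intro G hGmem hG U hU
        obtain ⟨m, rfl⟩ : ∃ m, n = m + 1 := ⟨n - 1, by omega⟩
        have hG' : G = ∅ ∨ ∃ d : ℕ, ∃ Gs : Fin (d + 1) → Finset ℕ,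
            (∀ i, Gs i ∈ Schreier (m + 1) ∧ (Gs i).Nonempty) ∧
            (∀ i : Fin d, ∀ a ∈ Gs i.castSucc, ∀ b ∈ Gs i.succ, a < b) ∧
            (∀ k ∈ Gs 0, d + 1 ≤ k) ∧
            (∀ x, x ∈ G ↔ ∃ i, x ∈ Gs i) := hGmem
        rcases hG' with rfl | ⟨d, Gs, hS, hordG, hd0, hFG⟩
        · exact absurd hG (by simp)
        have hposG : ∀ i, ∀ k ∈ Gs i, 1 ≤ k := fun i => schreier_pos m (Gs i) (hS i).1
        -- block ordering
        have blocks : ∀ i j : Fin (d + 1), i < j → ∀ a ∈ Gs i, ∀ b ∈ Gs j, a < b := by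
          intro i j hij a ha b hb
          have h1 : ∀ i : Fin (d + 1), (Gs i).min' (hS i).2 ≤ (Gs i).max' (hS i).2 :=
            fun i => Finset.min'_le _ _ (Finset.max'_mem _ _)
          have h2 : ∀ i : Fin d, (Gs i.castSucc).max' (hS i.castSucc).2
              < (Gs i.succ).min' (hS i.succ).2 :=
            fun i => hordG i _ (Finset.max'_mem _ _) _ (Finset.min'_mem _ _)
          calc a ≤ (Gs i).max' (hS i).2 := Finset.le_max' _ _ ha
            _ < (Gs j).min' (hS j).2 :=
              finChainLt (fun i => (Gs i).min' (hS i).2) (fun i => (Gs i).max' (hS i).2)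
                h1 h2 j i hij
            _ ≤ b := Finset.min'_le _ _ hb
        set Ui : Fin (d + 1) → Finset Cantor := fun i => (Gs i).biUnion Fk with hUi
        have hGSUi : ∀ i, GS (n₀ + (m + 1)) (Ui i) σ
            (mins ((Gs i).min' (hS i).2)) (maxs ((Gs i).max' (hS i).2)) :=
          fun i => ih (by omega) (Gs i) (hS i).1 (hS i).2 (Ui i)
            (fun x => Finset.mem_biUnion)
        have hmin : G.min' hG = (Gs 0).min' (hS 0).2 := by
          apply le_antisymm (Finset.min'_le _ _ ((hFG _).mpr ⟨0, Finset.min'_mem _ _⟩))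
          obtain ⟨i, hi⟩ := (hFG _).mp (G.min'_mem hG)
          rcases eq_or_ne i 0 with rfl | hne
          · exact Finset.min'_le _ _ hi
          · exact le_of_lt (blocks 0 i (Fin.pos_of_ne_zero hne) _ (Finset.min'_mem _ _) _ hi)
        have hmax : G.max' hG = (Gs (Fin.last d)).max' (hS (Fin.last d)).2 := by
          apply le_antisymm _ (Finset.le_max' _ _ ((hFG _).mpr ⟨Fin.last d, Finset.max'_mem _ _⟩))
          obtain ⟨i, hi⟩ := (hFG _).mp (G.max'_mem hG)
          rcases eq_or_ne i (Fin.last d) with rfl | hne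
          · exact Finset.le_max' _ _ hi
          · exact le_of_lt (blocks i (Fin.last d) (lt_of_le_of_ne (Fin.le_last i) hne)
              _ hi _ (Finset.max'_mem _ _))
        rw [hmin, hmax]
        exact GS.attached (n₀ + (m + 1)) d Ui
          (fun i => mins ((Gs i).min' (hS i).2)) (fun i => maxs ((Gs i).max' (hS i).2))
          σ U hGSUi
          (by
            intro i j hij x hx hx'
            obtain ⟨k, hk, hxk⟩ := Finset.mem_biUnion.mp hx
            obtain ⟨l, hl, hxl⟩ := Finset.mem_biUnion.mp hx'
            rcases eq_or_ne k l with rfl | hkl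
            · rcases hij.lt_or_gt with h | h
              · exact absurd (blocks i j h k hk k hl) (by omega)
              · exact absurd (blocks j i h k hl k hk) (by omega)
            · exact hdisj k l (hposG i k hk) (hposG j l hl) hkl x hxk hxl)
          (by
            intro i
            exact hltc _ _ (hposG _ _ (Finset.max'_mem _ _))
              (hordG i _ (Finset.max'_mem _ _) _ (Finset.min'_mem _ _)))
          (by
            have h1 : d + 1 ≤ (Gs 0).min' (hS 0).2 := hd0 _ (Finset.min'_mem _ _)
            calc ((d + 1 : ℕ) : ℕ∞) ≤ (((Gs 0).min' (hS 0).2 : ℕ) : ℕ∞) := by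
                  exact_mod_cast h1
              _ ≤ mins ((Gs 0).min' (hS 0).2) := hge _ (hposG _ _ (Finset.min'_mem _ _)))
          (by
            intro x
            rw [hU x]
            constructor
            · rintro ⟨k, hk, hx⟩
              obtain ⟨i, hki⟩ := (hFG k).mp hk
              exact ⟨i, Finset.mem_biUnion.mpr ⟨k, hki, hx⟩⟩
            · rintro ⟨i, hx⟩
              obtain ⟨k, hk, hxk⟩ := Finset.mem_biUnion.mp hx
              exact ⟨k, (hFG k).mpr ⟨i, hk⟩, hxk⟩)
end
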